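/- Let G be a finite simple graph containing edges e₁, e₂, e₃ forming a triangle. Let G_{2,3} = G with e₁ deleted, G_{1,3} = G with e₂ deleted, and G₃ = G with both e₁ and e₂ deleted. Then X_G = X_{G_{2,3}} + X_{G_{1,3}} − X_{G₃}. -/

import Mathlib

open SimpleGraph

/- The chromatic symmetric function of `G`, specialized to the `n` variables
`x_0, …, x_{n-1}`: the sum, over all proper colorings `κ : V → Fin n`, of
`∏_{v} x_{κ v}`.  Two graphs have the same chromatic symmetric function iff
these specializations agree for every `n`. -/
open scoped Classical in
noncomputable def csf {V : Type*} [Fintype V] (G : SimpleGraph V) (n : ℕ) :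
    MvPolynomial (Fin n) ℤ :=
  ∑ κ : V → Fin n,
    if ∀ u w, G.Adj u w → κ u ≠ κ w then ∏ v, MvPolynomial.X (κ v) else 0

/-- Triangle decomposition: if `e₁ = s(a,b)`, `e₂ = s(b,c)`, `e₃ = s(a,c)` form a
triangle of `G`, then `X_G = X_{G - e₁} + X_{G - e₂} - X_{G - e₁ - e₂}`. -/
theorem csf_triangle_decomposition {V : Type*} [Fintype V] (G : SimpleGraph V)
    (a b c : V) (hab : G.Adj a b) (hbc : G.Adj b c) (hac : G.Adj a c) :
    ∀ n, csf G n =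
      csf (G.deleteEdges {s(a, b)}) n + csf (G.deleteEdges {s(b, c)}) n -
        csf (G.deleteEdges {s(a, b), s(b, c)}) n := by
  classical
  intro n
  have hne_ab : a ≠ b := hab.ne
  have hne_bc : b ≠ c := hbc.ne
  have hne_ac : a ≠ c := hac.ne
  have hne_ba : b ≠ a := fun h => hne_ab h.symm
  have hne_cb : c ≠ b := fun h => hne_bc h.symm
  have hne_ca : c ≠ a := fun h => hne_ac h.symm
  have key : csf G n + csf (G.deleteEdges {s(a,b), s(b,c)}) n
      = csf (G.deleteEdges {s(a,b)}) n + csf (G.deleteEdges {s(b,c)}) n := by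
    simp only [csf]
    rw [← Finset.sum_add_distrib, ← Finset.sum_add_distrib]
    apply Finset.sum_congr rfl
    intro κ _
    set PG : Prop := ∀ u w, G.Adj u w → κ u ≠ κ w with hPGdef
    set P1 : Prop := ∀ u w, (G.deleteEdges {s(a,b)}).Adj u w → κ u ≠ κ w with hP1def
    set P2 : Prop := ∀ u w, (G.deleteEdges {s(b,c)}).Adj u w → κ u ≠ κ w with hP2def
    set P12 : Prop := ∀ u w, (G.deleteEdges {s(a,b), s(b,c)}).Adj u w → κ u ≠ κ w
        with hP12def
    have pair : ∀ {u w x y : V}, s(u,w) = s(x,y) → κ x ≠ κ y → κ u ≠ κ w := by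
      intro u w x y h hxy
      rw [Sym2.eq_iff] at h
      rcases h with ⟨rfl, rfl⟩ | ⟨rfl, rfl⟩
      exacts [hxy, fun h' => hxy h'.symm]
    -- basic implications
    have hG1 : PG → P1 := fun h u w hw =>
      h u w (SimpleGraph.deleteEdges_adj.1 hw).1
    have hG2 : PG → P2 := fun h u w hw =>
      h u w (SimpleGraph.deleteEdges_adj.1 hw).1
    have h112 : P1 → P12 := by
      intro h u w hw
      rw [SimpleGraph.deleteEdges_adj] at hw
      refine h u w (SimpleGraph.deleteEdges_adj.2 ⟨hw.1, fun hm => hw.2 ?_⟩)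
      rw [Set.mem_singleton_iff] at hm
      simp [hm]
    have h212 : P2 → P12 := by
      intro h u w hw
      rw [SimpleGraph.deleteEdges_adj] at hw
      refine h u w (SimpleGraph.deleteEdges_adj.2 ⟨hw.1, fun hm => hw.2 ?_⟩)
      rw [Set.mem_singleton_iff] at hm
      simp [hm]
    -- the third triangle edge is present in G - e1 - e2
    have hac12 : (G.deleteEdges {s(a,b), s(b,c)}).Adj a c := by
      rw [SimpleGraph.deleteEdges_adj]
      refine ⟨hac, ?_⟩
      simp [Sym2.eq_iff, hne_ab, hne_ba, hne_bc, hne_cb, hne_ac, hne_ca]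
    -- e2 is present in G - e1
    have hbc1 : (G.deleteEdges {s(a,b)}).Adj b c := by
      rw [SimpleGraph.deleteEdges_adj]
      refine ⟨hbc, ?_⟩
      simp [Sym2.eq_iff, hne_ab, hne_ba, hne_bc, hne_cb, hne_ac, hne_ca]
    -- e1 is present in G - e2
    have hab2 : (G.deleteEdges {s(b,c)}).Adj a b := by
      rw [SimpleGraph.deleteEdges_adj]
      refine ⟨hab, ?_⟩
      simp [Sym2.eq_iff, hne_ab, hne_ba, hne_bc, hne_cb, hne_ac, hne_ca]
    -- reconstruction lemmas
    have hrec1 : P12 → κ b ≠ κ c → P1 := by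
      intro h hB u w hw
      rw [SimpleGraph.deleteEdges_adj, Set.mem_singleton_iff] at hw
      by_cases hm : s(u,w) = s(b,c)
      · exact pair hm hB
      · refine h u w (SimpleGraph.deleteEdges_adj.2 ⟨hw.1, ?_⟩)
        simp only [Set.mem_insert_iff, Set.mem_singleton_iff]
        push_neg
        exact ⟨hw.2, hm⟩
    have hrec2 : P12 → κ a ≠ κ b → P2 := by
      intro h hA u w hw
      rw [SimpleGraph.deleteEdges_adj, Set.mem_singleton_iff] at hw
      by_cases hm : s(u,w) = s(a,b)
      · exact pair hm hA
      · refine h u w (SimpleGraph.deleteEdges_adj.2 ⟨hw.1, ?_⟩)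
        simp only [Set.mem_insert_iff, Set.mem_singleton_iff]
        push_neg
        exact ⟨hm, hw.2⟩
    have hrecG : P12 → κ a ≠ κ b → κ b ≠ κ c → PG := by
      intro h hA hB u w hw
      by_cases hm1 : s(u,w) = s(a,b)
      · exact pair hm1 hA
      by_cases hm2 : s(u,w) = s(b,c)
      · exact pair hm2 hB
      refine h u w (SimpleGraph.deleteEdges_adj.2 ⟨hw, ?_⟩)
      simp only [Set.mem_insert_iff, Set.mem_singleton_iff]
      push_neg
      exact ⟨hm1, hm2⟩
    by_cases hA : κ a = κ b <;> by_cases hB : κ b = κ c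
    · -- both equal: everything false
      have hκac : κ a = κ c := hA.trans hB
      have hnP12 : ¬ P12 := fun h => (h a c hac12) hκac
      rw [if_neg (fun h : PG => hnP12 (h112 (hG1 h))),
          if_neg hnP12, if_neg (fun h : P1 => hnP12 (h112 h)),
          if_neg (fun h : P2 => hnP12 (h212 h))]
    · -- κa = κb, κb ≠ κc : PG false, P2 false, P1 ↔ P12
      have hnPG : ¬ PG := fun h => (h a b hab) hA
      have hnP2 : ¬ P2 := fun h => (h a b hab2) hA
      have h1iff : P1 ↔ P12 := ⟨h112, fun h => hrec1 h hB⟩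
      rw [if_neg hnPG, if_neg hnP2]
      by_cases h : P12
      · rw [if_pos h, if_pos (hrec1 h hB)]
        ring
      · rw [if_neg h, if_neg (fun h' => h (h112 h'))]
    · -- κa ≠ κb, κb = κc : PG false, P1 false, P2 ↔ P12
      have hnPG : ¬ PG := fun h => (h b c hbc) hB
      have hnP1 : ¬ P1 := fun h => (h b c hbc1) hB
      have h2iff : P2 ↔ P12 := ⟨h212, fun h => hrec2 h hA⟩
      rw [if_neg hnPG, if_neg hnP1]
      by_cases h : P12
      · rw [if_pos h, if_pos (hrec2 h hA)]
      · rw [if_neg h, if_neg (fun h' => h (h212 h'))]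
    · -- both distinct: PG ↔ P1, P2 ↔ P12
      have hGiff : PG ↔ P1 := ⟨hG1, fun h => hrecG (h112 h) hA hB⟩
      have h2iff : P2 ↔ P12 := ⟨h212, fun h => hrec2 h hA⟩
      by_cases h1 : P1
      · rw [if_pos (hrecG (h112 h1) hA hB), if_pos h1]
        by_cases h : P12
        · rw [if_pos h, if_pos (hrec2 h hA)]
        · rw [if_neg h, if_neg (fun h' => h (h212 h'))]
      · rw [if_neg (fun h' => h1 (hG1 h')), if_neg h1]
        by_cases h : P12
        · rw [if_pos h, if_pos (hrec2 h hA)]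
        · rw [if_neg h, if_neg (fun h' => h (h212 h'))]
  linear_combination key
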